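/- arXiv:1401.6090 — 2 statements merged into one kernel-verified Lean document; each statement's English description precedes it below -/
import Mathlib

section
/- Let 𝐇 : (0,∞) → (0,∞) satisfy 𝐇(1) = 1 and 𝐇(t) ≤ max{1, t}, and suppose 𝐇 has left and right derivatives θ₋ = 𝐇′(1−) and θ₊ = 𝐇′(1+) at the point 1 with θ₋ ≤ θ₊. Let h : (0,∞) → (0,∞) be of type 𝐇 in the sense that for every n, every positive definite Hermitian A ∈ Mₙ(ℂ), every T ∈ Mₙ(ℂ), and all M₀, M₁ > 0, the conditions TᴴT ≤ M₀·I and TᴴAT ≤ M₁·A imply Tᴴh(A)T ≤ M₀·𝐇(M₁/M₀)·h(A). Then for every c > 0 and every λ > 0, min{λ^{θ₋}, λ^{θ₊}} ≤ h(cλ)/h(c) ≤ max{λ^{θ₋}, λ^{θ₊}}. In particular, if 𝐇 is differentiable at 1 with 𝐇′(1) = θ, then h(λ) = h(1)·λ^{θ} for all λ > 0. -/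
open Matrix MeasureTheory
open scoped ComplexOrder

/-- Loewner order on complex `n × n` matrices: `LoewnerLE A B` iff `B - A` is
positive semidefinite (i.e. `A ≤ B`). -/
def LoewnerLE {n : ℕ} (A B : Matrix (Fin n) (Fin n) ℂ) : Prop := (B - A).PosSemidef

/-- Functional calculus for Hermitian matrices: apply `h : ℝ → ℝ` to each eigenvalue
in a spectral decomposition of `A` (junk value `0` for non-Hermitian input). -/
noncomputable def matFunCalc {n : ℕ} (h : ℝ → ℝ) (A : Matrix (Fin n) (Fin n) ℂ) :
    Matrix (Fin n) (Fin n) ℂ :=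
  if hA : A.IsHermitian then
    (hA.eigenvectorUnitary : Matrix (Fin n) (Fin n) ℂ) *
      diagonal (fun i => (h (hA.eigenvalues i) : ℂ)) *
      star (hA.eigenvectorUnitary : Matrix (Fin n) (Fin n) ℂ)
  else 0

private lemma cancelU {n : ℕ} {U : Matrix (Fin n) (Fin n) ℂ} (hU1 : Uᴴ * U = 1)
    (Z : Matrix (Fin n) (Fin n) ℂ) : Uᴴ * (U * Z) = Z := by
  rw [← Matrix.mul_assoc, hU1, Matrix.one_mul]

private lemma conj_pair {n : ℕ} {U : Matrix (Fin n) (Fin n) ℂ} (hU1 : Uᴴ * U = 1)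
    (S S' : Matrix (Fin n) (Fin n) ℂ) :
    (U * S * Uᴴ)ᴴ * (U * S' * Uᴴ) = U * (Sᴴ * S') * Uᴴ := by
  simp only [Matrix.conjTranspose_mul, Matrix.conjTranspose_conjTranspose, Matrix.mul_assoc,
    cancelU hU1]

private lemma conj_sandwich {n : ℕ} {U : Matrix (Fin n) (Fin n) ℂ} (hU1 : Uᴴ * U = 1)
    (S X : Matrix (Fin n) (Fin n) ℂ) :
    (U * S * Uᴴ)ᴴ * (U * X * Uᴴ) * (U * S * Uᴴ) = U * (Sᴴ * X * S) * Uᴴ := by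
  simp only [Matrix.conjTranspose_mul, Matrix.conjTranspose_conjTranspose, Matrix.mul_assoc,
    cancelU hU1]

private lemma conj_smul {n : ℕ} (U : Matrix (Fin n) (Fin n) ℂ) (r : ℂ)
    (X : Matrix (Fin n) (Fin n) ℂ) : U * (r • X) * Uᴴ = r • (U * X * Uᴴ) := by
  simp [Matrix.mul_smul, Matrix.smul_mul]

private lemma loewner_conj_of {n : ℕ} {U : Matrix (Fin n) (Fin n) ℂ}
    {X Y : Matrix (Fin n) (Fin n) ℂ}
    (hXY : LoewnerLE X Y) : LoewnerLE (U * X * Uᴴ) (U * Y * Uᴴ) := by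
  unfold LoewnerLE at *
  have : U * Y * Uᴴ - U * X * Uᴴ = U * (Y - X) * Uᴴ := by
    simp [Matrix.mul_sub, Matrix.sub_mul]
  rw [this]
  exact hXY.mul_mul_conjTranspose_same U

private lemma loewner_conj_rev {n : ℕ} {U : Matrix (Fin n) (Fin n) ℂ} (hU1 : Uᴴ * U = 1)
    {X Y : Matrix (Fin n) (Fin n) ℂ}
    (hXY : LoewnerLE (U * X * Uᴴ) (U * Y * Uᴴ)) : LoewnerLE X Y := by
  unfold LoewnerLE at *
  have h0 : U * Y * Uᴴ - U * X * Uᴴ = U * (Y - X) * Uᴴ := by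
    simp [Matrix.mul_sub, Matrix.sub_mul]
  rw [h0] at hXY
  have h2 := hXY.conjTranspose_mul_mul_same U
  have h3 : Uᴴ * (U * (Y - X) * Uᴴ) * U = Y - X := by
    simp only [Matrix.mul_assoc, hU1, Matrix.mul_one]
    simp only [cancelU hU1]
  rwa [h3] at h2

private lemma std_conj_diag {n : ℕ} (i j : Fin n) (c : ℂ) (d : Fin n → ℂ) :
    (Matrix.single i j c)ᴴ * Matrix.diagonal d * Matrix.single i j c
      = Matrix.diagonal (fun k => if k = j then star c * d i * c else 0) := by
  ext k l
  simp only [Matrix.mul_apply, Matrix.single, Matrix.diagonal, Matrix.conjTranspose_apply,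
    Matrix.of_apply]
  rw [Finset.sum_eq_single i]
  · split_ifs <;> simp_all <;> tauto
  · intro x _ hx
    simp [Ne.symm hx]
  · simp

private lemma std_pair {n : ℕ} (i j : Fin n) (c : ℂ) :
    (Matrix.single i j c)ᴴ * Matrix.single i j c
      = Matrix.diagonal (fun k => if k = j then star c * c else 0) := by
  have := std_conj_diag i j c (fun _ => 1)
  simpa [Matrix.mul_one] using
    (by simpa [Matrix.diagonal_one, Matrix.mul_one] using this :
      (Matrix.single i j c)ᴴ * Matrix.single i j c
        = Matrix.diagonal (fun k => if k = j then star c * 1 * c else 0))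

private lemma diag2_eigs (a b : ℝ) (hA : (Matrix.diagonal ![(a:ℂ),(b:ℂ)]).IsHermitian) :
    ∃ i j : Fin 2, i ≠ j ∧ hA.eigenvalues i = a ∧ hA.eigenvalues j = b := by
  set e := hA.eigenvalues with he
  have hdet : (a:ℂ) * b = (e 0 : ℂ) * (e 1 : ℂ) := by
    have := hA.det_eq_prod_eigenvalues
    simpa [Matrix.det_diagonal, Fin.prod_univ_two] using this
  have htr : (a:ℂ) + b = (e 0 : ℂ) + (e 1 : ℂ) := by
    have h1 := hA.spectral_theorem
    have h2 := congrArg Matrix.trace h1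
    rw [Unitary.conjStarAlgAut_apply] at h2
    rw [Matrix.trace_mul_cycle] at h2
    rw [show (star (hA.eigenvectorUnitary : Matrix (Fin 2) (Fin 2) ℂ)) *
        (hA.eigenvectorUnitary : Matrix (Fin 2) (Fin 2) ℂ) = 1 from
      (Unitary.mem_iff.mp hA.eigenvectorUnitary.2).1, Matrix.one_mul] at h2
    simpa [Matrix.trace_diagonal, Fin.sum_univ_two] using h2
  have hdet' : a * b = e 0 * e 1 := by exact_mod_cast hdet
  have htr' : a + b = e 0 + e 1 := by exact_mod_cast htr
  have hz : (e 0 - a) * (e 0 - b) = 0 := by linear_combination (-(e 0)) * htr' + hdet'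
  rcases mul_eq_zero.mp hz with h0 | h0
  · exact ⟨0, 1, by decide, by linarith, by linarith⟩
  · exact ⟨1, 0, by decide, by linarith, by linarith⟩

private lemma key_ineq (H : ℝ → ℝ) (h : ℝ → ℝ)
    (htype : ∀ n : ℕ, ∀ A : Matrix (Fin n) (Fin n) ℂ, A.PosDef →
      ∀ T : Matrix (Fin n) (Fin n) ℂ, ∀ M₀ M₁ : ℝ, 0 < M₀ → 0 < M₁ →
        LoewnerLE (Tᴴ * T) (M₀ • (1 : Matrix (Fin n) (Fin n) ℂ)) →
        LoewnerLE (Tᴴ * A * T) (M₁ • A) →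
        LoewnerLE (Tᴴ * matFunCalc h A * T) ((M₀ * H (M₁ / M₀)) • matFunCalc h A))
    (a b : ℝ) (ha : 0 < a) (hb : 0 < b) :
    h a ≤ H (a / b) * h b := by
  set A : Matrix (Fin 2) (Fin 2) ℂ := Matrix.diagonal ![(a:ℂ),(b:ℂ)] with hAdef
  have hApd : A.PosDef := Matrix.PosDef.diagonal (fun k => by
    fin_cases k <;> simp [Complex.zero_lt_real, ha, hb])
  have hA : A.IsHermitian := hApd.isHermitian
  obtain ⟨i, j, hij, hia, hjb⟩ := diag2_eigs a b hA
  set U : Matrix (Fin 2) (Fin 2) ℂ := (hA.eigenvectorUnitary : Matrix (Fin 2) (Fin 2) ℂ)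
    with hUdef
  have hU1 : Uᴴ * U = 1 := by
    simpa [Matrix.star_eq_conjTranspose] using (Unitary.mem_iff.mp hA.eigenvectorUnitary.2).1
  have hU2 : U * Uᴴ = 1 := by
    simpa [Matrix.star_eq_conjTranspose] using (Unitary.mem_iff.mp hA.eigenvectorUnitary.2).2
  set ev := hA.eigenvalues with hev
  have hevpos : ∀ k, 0 < ev k := hApd.eigenvalues_pos
  set D : Matrix (Fin 2) (Fin 2) ℂ := Matrix.diagonal (fun k => (ev k : ℂ)) with hD
  set Dh : Matrix (Fin 2) (Fin 2) ℂ := Matrix.diagonal (fun k => (h (ev k) : ℂ)) with hDh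
  have hspec : A = U * D * Uᴴ := by
    have h1 := hA.spectral_theorem
    rw [Unitary.conjStarAlgAut_apply, Matrix.star_eq_conjTranspose] at h1
    exact h1
  have hfc : matFunCalc h A = U * Dh * Uᴴ := by
    rw [matFunCalc, dif_pos hA, ← Matrix.star_eq_conjTranspose]
  set c : ℂ := ((Real.sqrt b : ℝ) : ℂ) with hc
  have hcc : star c * c = ((b : ℝ) : ℂ) := by
    rw [hc, Complex.star_def, Complex.conj_ofReal, ← Complex.ofReal_mul,
      Real.mul_self_sqrt hb.le]
  set S : Matrix (Fin 2) (Fin 2) ℂ := Matrix.single i j c with hS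
  set T : Matrix (Fin 2) (Fin 2) ℂ := U * S * Uᴴ with hT
  -- hypothesis 1
  have hyp1 : LoewnerLE (Tᴴ * T) ((b : ℝ) • (1 : Matrix (Fin 2) (Fin 2) ℂ)) := by
    have e1 : Tᴴ * T = U * (Sᴴ * S) * Uᴴ := conj_pair hU1 S S
    have e2 : (b : ℝ) • (1 : Matrix (Fin 2) (Fin 2) ℂ) = U * ((b : ℝ) • 1) * Uᴴ := by
      rw [Matrix.mul_smul, Matrix.smul_mul, Matrix.mul_one, hU2]
    rw [e1, e2]
    apply loewner_conj_of
    unfold LoewnerLE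
    have e3 : (b : ℝ) • (1 : Matrix (Fin 2) (Fin 2) ℂ) - Sᴴ * S
        = Matrix.diagonal (fun k => if k = j then 0 else ((b:ℝ):ℂ)) := by
      rw [hS, std_pair]
      simp only [hcc]
      ext k l
      simp only [Matrix.sub_apply, Matrix.smul_apply, Matrix.one_apply, Matrix.diagonal_apply,
        Complex.real_smul]
      split_ifs <;> push_cast <;> ring
    rw [e3]
    refine Matrix.posSemidef_diagonal_iff.mpr fun k => ?_
    split_ifs
    · exact le_refl 0
    · exact Complex.zero_le_real.mpr hb.le
  -- hypothesis 2
  have hyp2 : LoewnerLE (Tᴴ * A * T) ((a : ℝ) • A) := by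
    have e1 : Tᴴ * A * T = U * (Sᴴ * D * S) * Uᴴ := by
      rw [hspec]; exact conj_sandwich hU1 S D
    have e2 : (a : ℝ) • A = U * ((a : ℝ) • D) * Uᴴ := by
      rw [hspec, Matrix.mul_smul, Matrix.smul_mul]
    rw [e1, e2]
    apply loewner_conj_of
    unfold LoewnerLE
    have e3 : (a : ℝ) • D - Sᴴ * D * S
        = Matrix.diagonal (fun k => ((a * ev k : ℝ) : ℂ) - if k = j then ((a*b:ℝ):ℂ) else 0) := by
      rw [hS, hD, std_conj_diag]
      ext k l
      simp only [Matrix.sub_apply, Matrix.smul_apply, Matrix.diagonal_apply, Complex.real_smul]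
      split_ifs <;> push_cast <;> (try simp only [hia, ← hcc]) <;> ring
    rw [e3]
    refine Matrix.posSemidef_diagonal_iff.mpr fun k => ?_
    split_ifs with hk
    · rw [hk, hjb]
      simp
    · simpa using Complex.zero_le_real.mpr (mul_nonneg ha.le (hevpos k).le)
  -- apply htype
  have hcon := htype 2 A hApd T b a hb ha hyp1 hyp2
  rw [hfc] at hcon
  have e1 : Tᴴ * (U * Dh * Uᴴ) * T = U * (Sᴴ * Dh * S) * Uᴴ := conj_sandwich hU1 S Dh
  have e2 : (b * H (a / b)) • (U * Dh * Uᴴ) = U * ((b * H (a / b) : ℝ) • Dh) * Uᴴ := by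
    rw [Matrix.mul_smul, Matrix.smul_mul]
  rw [e1, e2] at hcon
  have hcon2 := loewner_conj_rev hU1 hcon
  unfold LoewnerLE at hcon2
  have e3 : (b * H (a / b) : ℝ) • Dh - Sᴴ * Dh * S
      = Matrix.diagonal (fun k => ((b * H (a / b) * h (ev k) : ℝ) : ℂ)
          - if k = j then ((h a * b : ℝ) : ℂ) else 0) := by
    rw [hS, hDh, std_conj_diag]
    ext k l
    simp only [Matrix.sub_apply, Matrix.smul_apply, Matrix.diagonal_apply, Complex.real_smul]
    split_ifs <;> push_cast <;> (try simp only [hia, ← hcc]) <;> ring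
  rw [e3] at hcon2
  have hj := Matrix.posSemidef_diagonal_iff.mp hcon2 j
  rw [if_pos rfl] at hj
  rw [← Complex.ofReal_sub] at hj
  have hj' : (0:ℝ) ≤ b * H (a / b) * h (ev j) - h a * b := Complex.zero_le_real.mp hj
  rw [hjb] at hj'
  nlinarith [hj', hb]

private lemma tele2 {φ L : ℝ → ℝ} (hφ : ∀ x y, φ x - φ y ≤ L (x - y)) (x y : ℝ) (n : ℕ) :
    φ x - φ y ≤ ((n:ℝ)+1) * L ((x - y) / ((n:ℝ)+1)) := by
  set N : ℝ := (n:ℝ)+1 with hN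
  have hN0 : N ≠ 0 := by positivity
  set t : ℝ := x - y with htdef
  have key : ∀ m : ℕ, φ (y + m * (t / N)) - φ y ≤ m * L (t / N) := by
    intro m
    induction m with
    | zero => simp
    | succ m ih =>
      have step := hφ (y + ((m:ℝ)+1) * (t/N)) (y + (m:ℝ) * (t/N))
      rw [show (y + ((m:ℝ)+1) * (t/N)) - (y + (m:ℝ) * (t/N)) = t/N by ring] at step
      push_cast
      push_cast at ih
      linarith
  have h2 := key (n+1)
  rw [show ((((n:ℕ)+1 : ℕ)):ℝ) * (t/N) = t by push_cast; rw [← hN]; field_simp] at h2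
  rw [show y + t = x by rw [htdef]; ring] at h2
  push_cast at h2
  rw [← hN] at h2
  exact h2

private lemma chain_bound {L : ℝ → ℝ} {θ t v : ℝ} (ht : 0 < t)
    (hL : Filter.Tendsto (fun x => L x / x) (nhdsWithin 0 (Set.Ioi 0)) (nhds θ))
    (hv : ∀ n : ℕ, v ≤ ((n:ℝ)+1) * L (t / ((n:ℝ)+1))) : v ≤ θ * t := by
  have hu : Filter.Tendsto (fun n : ℕ => t / ((n:ℝ)+1)) Filter.atTop
      (nhdsWithin 0 (Set.Ioi 0)) := by
    apply tendsto_nhdsWithin_of_tendsto_nhds_of_eventually_within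
    · have hden : Filter.Tendsto (fun n : ℕ => (n:ℝ)+1) Filter.atTop Filter.atTop :=
        Filter.tendsto_atTop_add_const_right _ 1 tendsto_natCast_atTop_atTop
      exact Filter.Tendsto.div_atTop tendsto_const_nhds hden
    · exact Filter.Eventually.of_forall fun n => div_pos ht (by positivity)
  have h2 : Filter.Tendsto (fun n : ℕ => L (t/((n:ℝ)+1)) / (t/((n:ℝ)+1)))
      Filter.atTop (nhds θ) := hL.comp hu
  have h3 : Filter.Tendsto (fun n : ℕ => ((n:ℝ)+1) * L (t/((n:ℝ)+1)))
      Filter.atTop (nhds (θ * t)) := by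
    have h4 := h2.mul_const t
    refine Filter.Tendsto.congr (fun n => ?_) h4
    have hne : ((n:ℝ)+1) ≠ 0 := by positivity
    field_simp
  exact ge_of_tendsto h3 (Filter.Eventually.of_forall hv)

private lemma slope_tendsto {L : ℝ → ℝ} {θ : ℝ} (hL0 : L 0 = 0)
    (hd : HasDerivWithinAt L θ (Set.Ici 0) 0) :
    Filter.Tendsto (fun x => L x / x) (nhdsWithin 0 (Set.Ioi 0)) (nhds θ) := by
  have h1 := hasDerivWithinAt_iff_tendsto_slope.mp hd
  rw [Set.Ici_sdiff_left] at h1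
  refine h1.congr fun x => ?_
  rw [slope_def_field, hL0, sub_zero, sub_zero]

private lemma logH_deriv_right {H : ℝ → ℝ} {θp : ℝ} (Hone : H 1 = 1)
    (Hright : HasDerivWithinAt H θp (Set.Ici 1) 1) :
    HasDerivWithinAt (fun x => Real.log (H (Real.exp x))) θp (Set.Ici 0) 0 := by
  have hexp : HasDerivWithinAt Real.exp 1 (Set.Ici 0) 0 := by
    simpa using (Real.hasDerivAt_exp 0).hasDerivWithinAt
  have hH : HasDerivWithinAt H θp (Set.Ici 1) (Real.exp 0) := by
    simpa [Real.exp_zero] using Hright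
  have maps : Set.MapsTo Real.exp (Set.Ici 0) (Set.Ici 1) := fun x hx => by
    simpa using Real.one_le_exp hx
  have hcomp := HasDerivWithinAt.comp (0:ℝ) hH hexp maps
  have hlog : HasDerivAt Real.log 1 ((fun x => H (Real.exp x)) 0) := by
    have h1 : (fun x => H (Real.exp x)) 0 = 1 := by simp [Real.exp_zero, Hone]
    rw [h1]
    simpa using Real.hasDerivAt_log (x := (1:ℝ)) one_ne_zero
  have := hlog.comp_hasDerivWithinAt (0:ℝ) hcomp
  rw [show (1:ℝ) * (θp * 1) = θp by ring] at this
  exact this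

private lemma logH_deriv_left {H : ℝ → ℝ} {θm : ℝ} (Hone : H 1 = 1)
    (Hleft : HasDerivWithinAt H θm (Set.Iic 1) 1) :
    HasDerivWithinAt (fun x => Real.log (H (Real.exp (-x)))) (-θm) (Set.Ici 0) 0 := by
  have hneg : HasDerivWithinAt (fun x : ℝ => -x) (-1) (Set.Ici 0) 0 :=
    (hasDerivAt_neg (0:ℝ)).hasDerivWithinAt
  have hexp : HasDerivWithinAt Real.exp 1 (Set.Iic 0) ((fun x : ℝ => -x) 0) := by
    simpa using (Real.hasDerivAt_exp 0).hasDerivWithinAt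
  have mapsneg : Set.MapsTo (fun x : ℝ => -x) (Set.Ici 0) (Set.Iic 0) := fun x hx => by
    simpa using hx
  have hexpneg := HasDerivWithinAt.comp (0:ℝ) hexp hneg mapsneg
  -- hexpneg : HasDerivWithinAt (Real.exp ∘ fun x => -x) (1 * -1) (Ici 0) 0
  have hH : HasDerivWithinAt H θm (Set.Iic 1) ((Real.exp ∘ fun x : ℝ => -x) 0) := by
    simpa [Function.comp, Real.exp_zero] using Hleft
  have mapsexp : Set.MapsTo (Real.exp ∘ fun x : ℝ => -x) (Set.Ici 0) (Set.Iic 1) := fun x hx => by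
    simp only [Function.comp, Set.mem_Iic]
    exact Real.exp_le_one_iff.mpr (by simpa using hx)
  have hcomp := HasDerivWithinAt.comp (0:ℝ) hH hexpneg mapsexp
  have hlog : HasDerivAt Real.log 1 ((H ∘ Real.exp ∘ fun x : ℝ => -x) 0) := by
    have h1 : (H ∘ Real.exp ∘ fun x : ℝ => -x) 0 = 1 := by
      simp [Function.comp, Real.exp_zero, Hone]
    rw [h1]
    simpa using Real.hasDerivAt_log (x := (1:ℝ)) one_ne_zero
  have := hlog.comp_hasDerivWithinAt (0:ℝ) hcomp
  have heq : (Real.log ∘ H ∘ Real.exp ∘ fun x : ℝ => -x)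
      = fun x => Real.log (H (Real.exp (-x))) := rfl
  rw [heq] at this
  rw [show (1:ℝ) * (θm * (1 * -1)) = -θm by ring] at this
  exact this

private lemma master_bounds {H h : ℝ → ℝ} {θm θp : ℝ}
    (Hone : H 1 = 1)
    (Hleft : HasDerivWithinAt H θm (Set.Iic 1) 1)
    (Hright : HasDerivWithinAt H θp (Set.Ici 1) 1)
    (hpos : ∀ l : ℝ, 0 < l → 0 < h l)
    (key : ∀ a b : ℝ, 0 < a → 0 < b → h a ≤ H (a / b) * h b)
    (x y : ℝ) :
    min (θm * (x - y)) (θp * (x - y)) ≤ Real.log (h (Real.exp x)) - Real.log (h (Real.exp y)) ∧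
    Real.log (h (Real.exp x)) - Real.log (h (Real.exp y)) ≤ max (θm * (x - y)) (θp * (x - y)) := by
  set φ : ℝ → ℝ := fun s => Real.log (h (Real.exp s)) with hφdef
  set L : ℝ → ℝ := fun s => Real.log (H (Real.exp s)) with hLdef
  have Hpos : ∀ t : ℝ, 0 < t → 0 < H t := by
    intro t htp
    have hk := key t 1 htp one_pos
    rw [div_one] at hk
    nlinarith [hpos 1 one_pos, hpos t htp]
  have hφL : ∀ u v : ℝ, φ u - φ v ≤ L (u - v) := by
    intro u v
    have k1 := key (Real.exp u) (Real.exp v) (Real.exp_pos u) (Real.exp_pos v)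
    rw [← Real.exp_sub] at k1
    have hHp := Hpos _ (Real.exp_pos (u - v))
    have h1 := Real.log_le_log (hpos _ (Real.exp_pos u)) k1
    rw [Real.log_mul hHp.ne' (hpos _ (Real.exp_pos v)).ne'] at h1
    simp only [hφdef, hLdef]
    linarith
  have hL0 : L 0 = 0 := by simp [hLdef, Real.exp_zero, Hone]
  have hslp : Filter.Tendsto (fun s => L s / s) (nhdsWithin 0 (Set.Ioi 0)) (nhds θp) :=
    slope_tendsto hL0 (logH_deriv_right Hone Hright)
  have hslm : Filter.Tendsto (fun s => (fun r => L (-r)) s / s) (nhdsWithin 0 (Set.Ioi 0))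
      (nhds (-θm)) :=
    slope_tendsto (by simp [hLdef, Hone]) (logH_deriv_left Hone Hleft)
  have hψL : ∀ u v : ℝ, (fun s => φ (-s)) u - (fun s => φ (-s)) v
      ≤ (fun s => L (-s)) (u - v) := by
    intro u v
    have h2 := hφL (-u) (-v)
    rw [show (-u) - (-v) = -(u - v) by ring] at h2
    simpa using h2
  rcases lt_trichotomy x y with hlt | heq | hgt
  · have ht : 0 < y - x := by linarith
    have up : φ x - φ y ≤ (-θm) * (y - x) := by
      apply chain_bound ht hslm
      intro n
      have h3 := tele2 (φ := fun s => φ (-s)) (L := fun s => L (-s)) hψL (-x) (-y) n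
      simpa [show (-x) - (-y) = y - x by ring] using h3
    have lo : φ y - φ x ≤ θp * (y - x) := by
      apply chain_bound ht hslp
      intro n
      exact tele2 hφL y x n
    constructor
    · refine le_trans (min_le_right _ _) ?_
      have e2 : θp * (x - y) = -(θp * (y - x)) := by ring
      linarith
    · refine le_trans ?_ (le_max_left _ _)
      have e1 : (-θm) * (y - x) = θm * (x - y) := by ring
      linarith
  · subst heq
    simp
  · have ht : 0 < x - y := by linarith
    have up : φ x - φ y ≤ θp * (x - y) := by
      apply chain_bound ht hslp
      intro n
      exact tele2 hφL x y n
    have lo : φ y - φ x ≤ (-θm) * (x - y) := by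
      apply chain_bound ht hslm
      intro n
      have h3 := tele2 (φ := fun s => φ (-s)) (L := fun s => L (-s)) hψL (-y) (-x) n
      simpa [show (-y) - (-x) = x - y by ring] using h3
    constructor
    · refine le_trans (min_le_left _ _) ?_
      have e1 : θm * (x - y) = -((-θm) * (x - y)) := by ring
      linarith
    · exact le_trans up (le_max_right _ _)

/-- Theorem 6.2: if `𝐇(1) = 1`, `𝐇(t) ≤ max{1,t}`, and `𝐇` has
left and right derivatives `θ₋ ≤ θ₊` at `1`, then any positive function `h` of
type `𝐇` satisfies `min{λ^θ₋, λ^θ₊} ≤ h(cλ)/h(c) ≤ max{λ^θ₋, λ^θ₊}`; in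
particular, if `θ₋ = θ₊ = θ` then `h(λ) = h(1)·λ^θ`. -/
theorem type_H_power_bounds (H : ℝ → ℝ) (θm θp : ℝ)
    (Hone : H 1 = 1) (Hbound : ∀ t : ℝ, 0 < t → H t ≤ max 1 t)
    (Hleft : HasDerivWithinAt H θm (Set.Iic 1) 1)
    (Hright : HasDerivWithinAt H θp (Set.Ici 1) 1)
    (hθ : θm ≤ θp)
    (h : ℝ → ℝ) (hpos : ∀ l : ℝ, 0 < l → 0 < h l)
    (htype : ∀ n : ℕ, ∀ A : Matrix (Fin n) (Fin n) ℂ, A.PosDef →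
      ∀ T : Matrix (Fin n) (Fin n) ℂ, ∀ M₀ M₁ : ℝ, 0 < M₀ → 0 < M₁ →
        LoewnerLE (Tᴴ * T) (M₀ • (1 : Matrix (Fin n) (Fin n) ℂ)) →
        LoewnerLE (Tᴴ * A * T) (M₁ • A) →
        LoewnerLE (Tᴴ * matFunCalc h A * T) ((M₀ * H (M₁ / M₀)) • matFunCalc h A)) :
    (∀ c : ℝ, 0 < c → ∀ l : ℝ, 0 < l →
      min (l ^ θm) (l ^ θp) ≤ h (c * l) / h c ∧
        h (c * l) / h c ≤ max (l ^ θm) (l ^ θp)) ∧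
    (θm = θp → ∀ l : ℝ, 0 < l → h l = h 1 * l ^ θm) := by
  have key : ∀ a b : ℝ, 0 < a → 0 < b → h a ≤ H (a / b) * h b :=
    fun a b ha hb => key_ineq H h htype a b ha hb
  have part1 : ∀ c : ℝ, 0 < c → ∀ l : ℝ, 0 < l →
      min (l ^ θm) (l ^ θp) ≤ h (c * l) / h c ∧ h (c * l) / h c ≤ max (l ^ θm) (l ^ θp) := by
    intro c hc l hl
    have hmaster := master_bounds Hone Hleft Hright hpos key (Real.log (c*l)) (Real.log c)
    have hδ : Real.log (c*l) - Real.log c = Real.log l := by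
      rw [Real.log_mul hc.ne' hl.ne']; ring
    rw [hδ, Real.exp_log (by positivity), Real.exp_log hc] at hmaster
    have hratio : h (c*l) / h c = Real.exp (Real.log (h (c*l)) - Real.log (h c)) := by
      rw [← Real.log_div (hpos _ (by positivity)).ne' (hpos _ hc).ne',
        Real.exp_log (div_pos (hpos _ (by positivity)) (hpos _ hc))]
    constructor
    · rw [hratio]
      have hmm : min (l ^ θm) (l ^ θp)
          = Real.exp (min (θm * Real.log l) (θp * Real.log l)) := by
        rw [Real.exp_monotone.map_min, Real.rpow_def_of_pos hl, Real.rpow_def_of_pos hl,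
          mul_comm (Real.log l) θm, mul_comm (Real.log l) θp]
      rw [hmm]
      exact Real.exp_le_exp.mpr hmaster.1
    · rw [hratio]
      have hmm : max (l ^ θm) (l ^ θp)
          = Real.exp (max (θm * Real.log l) (θp * Real.log l)) := by
        rw [Real.exp_monotone.map_max, Real.rpow_def_of_pos hl, Real.rpow_def_of_pos hl,
          mul_comm (Real.log l) θm, mul_comm (Real.log l) θp]
      rw [hmm]
      exact Real.exp_le_exp.mpr hmaster.2
  refine ⟨part1, ?_⟩
  intro hθeq l hl
  have hb1 := part1 1 one_pos l hl
  rw [← hθeq, min_self, max_self, one_mul] at hb1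
  have heq2 := le_antisymm hb1.2 hb1.1
  rw [div_eq_iff (hpos 1 one_pos).ne'] at heq2
  rw [heq2]
  exact mul_comm _ _
end

section
/- Let 1 < p < ∞, let λ₁, …, λₙ be positive reals, and for x ∈ ℂⁿ and t > 0 define K_p(t, x) = inf{ ∑ᵢ |(x₀)ᵢ|^p + t·∑ᵢ λᵢ|(x₁)ᵢ|^p : x = x₀ + x₁, x₀, x₁ ∈ ℂⁿ }. Then for all x ∈ ℂⁿ and t > 0, K_p(t, x) = ∑ᵢ |xᵢ|^p · tλᵢ / (1 + (tλᵢ)^{1/(p−1)})^{p−1}. -/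
open Real Finset

lemma key_scalar {p c a b : ℝ} (hp : 1 < p) (hc : 0 < c) (ha : 0 ≤ a) (hb : 0 ≤ b) :
    c * (a + b) ^ p / (1 + c ^ (1 / (p - 1))) ^ (p - 1) ≤ a ^ p + c * b ^ p := by
  set q := p - 1 with hq
  have hq0 : 0 < q := by rw [hq]; linarith
  set u := c ^ (1 / q) with hu
  have hu0 : 0 < u := Real.rpow_pos_of_pos hc _
  have huq : u ^ q = c := by
    rw [hu, ← Real.rpow_mul hc.le, one_div_mul_cancel hq0.ne', Real.rpow_one]
  have h1u : 0 < 1 + u := by linarith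
  set w₁ : ℝ := u / (1 + u) with hw₁
  set w₂ : ℝ := 1 / (1 + u) with hw₂
  have hw₁0 : 0 < w₁ := div_pos hu0 h1u
  have hw₂0 : 0 < w₂ := by positivity
  have hwsum : w₁ + w₂ = 1 := by
    rw [hw₁, hw₂, ← add_div, add_comm u 1, div_self h1u.ne']
  have hmean := (convexOn_rpow hp.le).2
    (Set.mem_Ici.2 (div_nonneg ha hw₁0.le)) (Set.mem_Ici.2 (div_nonneg hb hw₂0.le))
    hw₁0.le hw₂0.le hwsum
  simp only [smul_eq_mul] at hmean
  rw [mul_div_cancel₀ _ hw₁0.ne', mul_div_cancel₀ _ hw₂0.ne'] at hmean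
  have hdiv : ∀ y w : ℝ, 0 ≤ y → 0 < w → w * (y / w) ^ p = y ^ p / w ^ q := by
    intro y w hy hw
    have hwp : w ^ p = w ^ (p - 1) * w := by
      rw [← Real.rpow_add_one hw.ne' (p - 1)]; congr 1; ring
    have h1 : w ^ (p - 1) ≠ 0 := (Real.rpow_pos_of_pos hw _).ne'
    rw [Real.div_rpow hy hw.le, hq, hwp]
    field_simp
  rw [hdiv a w₁ ha hw₁0, hdiv b w₂ hb hw₂0] at hmean
  have hw₁q : w₁ ^ q = c / (1 + u) ^ q := by
    rw [hw₁, Real.div_rpow hu0.le h1u.le, huq]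
  have hw₂q : w₂ ^ q = 1 / (1 + u) ^ q := by
    rw [hw₂, Real.div_rpow zero_le_one h1u.le, Real.one_rpow]
  rw [hw₁q, hw₂q] at hmean
  have h1uq : 0 < (1 + u) ^ q := Real.rpow_pos_of_pos h1u _
  rw [div_div_eq_mul_div, div_div_eq_mul_div, div_one] at hmean
  rw [div_le_iff₀ h1uq]
  calc c * (a + b) ^ p ≤ c * (a ^ p * (1 + u) ^ q / c + b ^ p * (1 + u) ^ q) :=
        mul_le_mul_of_nonneg_left hmean hc.le
    _ = (a ^ p + c * b ^ p) * (1 + u) ^ q := by field_simp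

/-- explicit formula for the `K_p`-functional of the weighted
couple `(ℓ_pⁿ, ℓ_pⁿ(λ))`:
`K_p(t,x) = ∑ᵢ |xᵢ|^p·tλᵢ/(1+(tλᵢ)^{1/(p−1)})^{p−1}`. -/
theorem Kp_functional_formula (n : ℕ) (p : ℝ) (hp : 1 < p)
    (lam : Fin n → ℝ) (hlam : ∀ i, 0 < lam i)
    (x : Fin n → ℂ) (t : ℝ) (ht : 0 < t) :
    sInf {r : ℝ | ∃ x₀ x₁ : Fin n → ℂ, x = x₀ + x₁ ∧
        r = ∑ i, ‖x₀ i‖ ^ p + t * ∑ i, lam i * ‖x₁ i‖ ^ p}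
      = ∑ i, ‖x i‖ ^ p * (t * lam i) /
          (1 + (t * lam i) ^ (1 / (p - 1))) ^ (p - 1) := by
  set q := p - 1 with hq
  have hq0 : 0 < q := by rw [hq]; linarith
  set S := {r : ℝ | ∃ x₀ x₁ : Fin n → ℂ, x = x₀ + x₁ ∧
      r = ∑ i, ‖x₀ i‖ ^ p + t * ∑ i, lam i * ‖x₁ i‖ ^ p} with hS
  set M := ∑ i, ‖x i‖ ^ p * (t * lam i) / (1 + (t * lam i) ^ (1 / q)) ^ q with hM
  have hc : ∀ i, 0 < t * lam i := fun i => mul_pos ht (hlam i)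
  have hu0 : ∀ i, 0 < (t * lam i) ^ (1 / q) := fun i => Real.rpow_pos_of_pos (hc i) _
  have h1u : ∀ i, 0 < 1 + (t * lam i) ^ (1 / q) := fun i => by linarith [hu0 i]
  -- rewrite any element of S as a single sum
  have hsum : ∀ x₀ x₁ : Fin n → ℂ,
      (∑ i, ‖x₀ i‖ ^ p + t * ∑ i, lam i * ‖x₁ i‖ ^ p)
        = ∑ i, (‖x₀ i‖ ^ p + (t * lam i) * ‖x₁ i‖ ^ p) := by
    intro x₀ x₁
    rw [Finset.sum_add_distrib, Finset.mul_sum]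
    congr 1
    exact Finset.sum_congr rfl fun i _ => by ring
  -- lower bound
  have hlb : ∀ r ∈ S, M ≤ r := by
    rintro r ⟨x₀, x₁, hx, rfl⟩
    rw [hsum, hM]
    refine Finset.sum_le_sum fun i _ => ?_
    set c := t * lam i
    set u := c ^ (1 / q)
    have htri : ‖x i‖ ≤ ‖x₀ i‖ + ‖x₁ i‖ := by
      rw [hx]; exact norm_add_le _ _
    calc ‖x i‖ ^ p * c / (1 + u) ^ q
        ≤ (‖x₀ i‖ + ‖x₁ i‖) ^ p * c / (1 + u) ^ q := by
          have hppos : (0:ℝ) ≤ p := by linarith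
          have h1' : ‖x i‖ ^ p ≤ (‖x₀ i‖ + ‖x₁ i‖) ^ p :=
            Real.rpow_le_rpow (norm_nonneg _) htri hppos
          have hD : 0 < (1 + u) ^ q := Real.rpow_pos_of_pos (h1u i) _
          exact div_le_div_of_nonneg_right
            (mul_le_mul_of_nonneg_right h1' (hc i).le) hD.le
      _ = c * (‖x₀ i‖ + ‖x₁ i‖) ^ p / (1 + u) ^ q := by ring_nf
      _ ≤ ‖x₀ i‖ ^ p + c * ‖x₁ i‖ ^ p :=
          key_scalar hp (hc i) (norm_nonneg _) (norm_nonneg _)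
  -- the minimizer
  have hmem : M ∈ S := by
    refine ⟨fun i => ((t * lam i) ^ (1 / q) / (1 + (t * lam i) ^ (1 / q)) : ℝ) • x i,
      fun i => ((1 + (t * lam i) ^ (1 / q))⁻¹ : ℝ) • x i, ?_, ?_⟩
    · funext i
      simp only [Pi.add_apply]
      rw [← add_smul]
      have hone : (t * lam i) ^ (1 / q) / (1 + (t * lam i) ^ (1 / q))
          + (1 + (t * lam i) ^ (1 / q))⁻¹ = 1 := by
        rw [div_add' _ _ _ (h1u i).ne', inv_mul_cancel₀ (h1u i).ne', add_comm _ (1:ℝ),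
          div_self (h1u i).ne']
      rw [hone, one_smul]
    · rw [hsum, hM]
      refine Finset.sum_congr rfl fun i _ => ?_
      set c := t * lam i with hcdef
      set u := c ^ (1 / q) with hudef
      have hu : 0 < u := hu0 i
      have h1 : 0 < 1 + u := h1u i
      have huq : u ^ q = c := by
        rw [hudef, ← Real.rpow_mul (hc i).le, one_div_mul_cancel hq0.ne', Real.rpow_one]
      have hup : u ^ p = c * u := by
        rw [show p = q + 1 by rw [hq]; ring, Real.rpow_add_one hu.ne', huq]
      have h1up : (1 + u) ^ p = (1 + u) ^ q * (1 + u) := by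
        rw [show p = q + 1 by rw [hq]; ring, Real.rpow_add_one h1.ne']
      have hAq : 0 < (1 + u) ^ q := Real.rpow_pos_of_pos h1 _
      rw [norm_smul, norm_smul, Real.norm_of_nonneg (by positivity),
        Real.norm_of_nonneg (by positivity)]
      rw [Real.mul_rpow (by positivity) (norm_nonneg _),
        Real.mul_rpow (by positivity) (norm_nonneg _),
        Real.div_rpow hu.le h1.le, Real.inv_rpow h1.le, hup, h1up]
      field_simp
      ring
  refine le_antisymm (csInf_le ⟨M, hlb⟩ hmem) (le_csInf ⟨M, hmem⟩ hlb)
end
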